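/- arXiv:1706.03131 — 2 statements merged into one kernel-verified Lean document; each statement's English description precedes it below -/
import Mathlib

section
/- (Lemma 3.4) Suppose ε_H ∈ (0,1), ζ ∈ (0,1), ⟨v, ∇²f(x) v⟩ ≥ ε_H ‖v‖² for all v ∈ ℝⁿ, ‖∇f(x)‖ ≤ U_g with U_g > 0, and ∇f(x) ≠ 0. Let d satisfy ‖∇²f(x) d + ∇f(x)‖ ≤ (ζ/2)·min{‖∇f(x)‖, ε_H ‖d‖} together with ⟨∇f(x), ∇²f(x) d + ∇f(x)⟩ = 0 (orthogonality of the initial and final CG residuals). Then the smallest nonnegative integer j_k such that f(x + θ^{j_k} d) < f(x) - (η/6) θ^{3 j_k} ‖d‖³ exists and satisfies j_k ≤ [ (1/2) log_θ( (3/(L_H+η)) · (1-ζ) ε_H² / (U_g √(1+ζ²/4)) ) ]_+ + 1, and moreover f(x) - f(x + θ^{j_k} d) ≥ (η/6)·min{ (4/(ζ + √(ζ² + 8 L_H)))³, (3θ²(1-ζ)/(L_H+η))³ } · min{‖∇f(x + θ^{j_k} d)‖³ ε_H^{-3}, ε_H³}. -/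
open scoped RealInnerProductSpace
open Set

variable {n : ℕ}

lemma aux_grad_taylor
    (gradf : EuclideanSpace ℝ (Fin n) → EuclideanSpace ℝ (Fin n))
    (hessf : EuclideanSpace ℝ (Fin n) → EuclideanSpace ℝ (Fin n) →L[ℝ] EuclideanSpace ℝ (Fin n))
    (hhess : ∀ x, HasFDerivAt gradf (hessf x) x)
    (L_H : ℝ)
    (hlip : ∀ x y, ‖hessf x - hessf y‖ ≤ L_H * ‖x - y‖)
    (x p : EuclideanSpace ℝ (Fin n)) :
    ‖gradf (x + p) - gradf x - hessf x p‖ ≤ L_H / 2 * ‖p‖ ^ 2 := by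
  set φ : ℝ → EuclideanSpace ℝ (Fin n) :=
    fun t => gradf (x + t • p) - gradf x - t • hessf x p with hφ
  have hd : ∀ t : ℝ, HasDerivAt φ (hessf (x + t • p) p - hessf x p) t := by
    intro t
    have h1 : HasDerivAt (fun t : ℝ => x + t • p) p t := by
      simpa using ((hasDerivAt_id t).smul_const p).const_add x
    have h2 : HasDerivAt (fun t : ℝ => gradf (x + t • p)) (hessf (x + t • p) p) t := by
      exact (hhess (x + t • p)).comp_hasDerivAt t h1
    have h3 : HasDerivAt (fun t : ℝ => t • hessf x p) (hessf x p) t := by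
      simpa using (hasDerivAt_id t).smul_const (hessf x p)
    exact (h2.sub_const (gradf x)).sub h3
  have hB : ∀ t : ℝ, HasDerivAt (fun t : ℝ => L_H * ‖p‖ ^ 2 / 2 * t ^ 2) (L_H * ‖p‖ ^ 2 * t) t := by
    intro t
    have := (hasDerivAt_pow 2 t).const_mul (L_H * ‖p‖ ^ 2 / 2)
    exact this.congr_deriv (by ring)
  have key : ∀ t ∈ Icc (0:ℝ) 1, ‖φ t‖ ≤ L_H * ‖p‖ ^ 2 / 2 * t ^ 2 := by
    apply image_norm_le_of_norm_deriv_right_le_deriv_boundary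
      (fun t _ => (hd t).continuousAt.continuousWithinAt)
      (fun t _ => (hd t).hasDerivWithinAt) _ hB
    · intro t ht
      have e1 : hessf (x + t • p) p - hessf x p = (hessf (x + t • p) - hessf x) p := by
        simp [ContinuousLinearMap.sub_apply]
      rw [e1]
      calc ‖(hessf (x + t • p) - hessf x) p‖ ≤ ‖hessf (x + t • p) - hessf x‖ * ‖p‖ :=
            (hessf (x + t • p) - hessf x).le_opNorm p
        _ ≤ L_H * ‖x + t • p - x‖ * ‖p‖ := by
            gcongr ?_ * ‖p‖; exact hlip _ _
        _ = L_H * (|t| * ‖p‖) * ‖p‖ := by rw [add_sub_cancel_left, norm_smul, Real.norm_eq_abs]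
        _ = L_H * ‖p‖ ^ 2 * t := by rw [abs_of_nonneg ht.1]; ring
    · simp [hφ]
  have h1 := key 1 ⟨zero_le_one, le_refl 1⟩
  have : L_H / 2 * ‖p‖ ^ 2 = L_H * ‖p‖ ^ 2 / 2 * 1 ^ 2 := by ring
  rw [this]
  simpa [hφ] using h1

lemma aux_fun_taylor
    (f : EuclideanSpace ℝ (Fin n) → ℝ)
    (gradf : EuclideanSpace ℝ (Fin n) → EuclideanSpace ℝ (Fin n))
    (hessf : EuclideanSpace ℝ (Fin n) → EuclideanSpace ℝ (Fin n) →L[ℝ] EuclideanSpace ℝ (Fin n))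
    (hgrad : ∀ x, HasGradientAt f (gradf x) x)
    (hhess : ∀ x, HasFDerivAt gradf (hessf x) x)
    (L_H : ℝ)
    (hlip : ∀ x y, ‖hessf x - hessf y‖ ≤ L_H * ‖x - y‖)
    (x p : EuclideanSpace ℝ (Fin n)) :
    f (x + p) ≤ f x + ⟪gradf x, p⟫ + 1/2 * ⟪hessf x p, p⟫ + L_H / 6 * ‖p‖ ^ 3 := by
  set F : ℝ → ℝ :=
    fun t => f (x + t • p) - f x - t * ⟪gradf x, p⟫ - t ^ 2 / 2 * ⟪hessf x p, p⟫ with hF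
  have hd : ∀ t : ℝ, HasDerivAt F
      (⟪gradf (x + t • p) - gradf x - t • hessf x p, p⟫) t := by
    intro t
    have h1 : HasDerivAt (fun t : ℝ => x + t • p) p t := by
      simpa using ((hasDerivAt_id t).smul_const p).const_add x
    have h2 : HasDerivAt (fun t : ℝ => f (x + t • p)) (⟪gradf (x + t • p), p⟫) t := by
      have := ((hgrad (x + t • p)).hasFDerivAt).comp_hasDerivAt t h1
      exact this.congr_deriv (by simp [InnerProductSpace.toDual_apply_apply])
    have h3 : HasDerivAt (fun t : ℝ => t * ⟪gradf x, p⟫) (⟪gradf x, p⟫) t := by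
      simpa using (hasDerivAt_id t).mul_const (⟪gradf x, p⟫ : ℝ)
    have h4 : HasDerivAt (fun t : ℝ => t ^ 2 / 2 * ⟪hessf x p, p⟫) (t * ⟪hessf x p, p⟫) t := by
      have := ((hasDerivAt_pow 2 t).div_const 2).mul_const (⟪hessf x p, p⟫ : ℝ)
      exact this.congr_deriv (by ring)
    have := ((h2.sub_const (f x)).sub h3).sub h4
    refine this.congr_deriv ?_
    rw [inner_sub_left, inner_sub_left, real_inner_smul_left]
  have hB : ∀ t : ℝ, HasDerivAt (fun t : ℝ => L_H * ‖p‖ ^ 3 / 6 * t ^ 3) (L_H * ‖p‖ ^ 3 / 2 * t ^ 2) t := by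
    intro t
    have := (hasDerivAt_pow 3 t).const_mul (L_H * ‖p‖ ^ 3 / 6)
    exact this.congr_deriv (by ring)
  have key : ∀ t ∈ Set.Icc (0:ℝ) 1, ‖F t‖ ≤ L_H * ‖p‖ ^ 3 / 6 * t ^ 3 := by
    apply image_norm_le_of_norm_deriv_right_le_deriv_boundary
      (fun t _ => (hd t).continuousAt.continuousWithinAt)
      (fun t _ => (hd t).hasDerivWithinAt) _ hB
    · intro t ht
      have hg := aux_grad_taylor gradf hessf hhess L_H hlip x (t • p)
      have e1 : hessf x (t • p) = t • hessf x p := by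
        simp
      rw [e1] at hg
      calc ‖⟪gradf (x + t • p) - gradf x - t • hessf x p, p⟫‖
          ≤ ‖gradf (x + t • p) - gradf x - t • hessf x p‖ * ‖p‖ := by
            rw [Real.norm_eq_abs]; exact abs_real_inner_le_norm _ _
        _ ≤ L_H / 2 * ‖t • p‖ ^ 2 * ‖p‖ := by gcongr ?_ * ‖p‖
        _ = L_H * ‖p‖ ^ 3 / 2 * t ^ 2 := by
            rw [norm_smul, Real.norm_eq_abs, abs_of_nonneg ht.1]; ring
    · simp [hF]
  have h1 := key 1 ⟨zero_le_one, le_refl 1⟩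
  rw [Real.norm_eq_abs] at h1
  have h2 := (le_abs_self (F 1)).trans h1
  simp only [hF, one_smul, one_pow, one_mul] at h2
  linarith

lemma min_cube (a b : ℝ) (ha : 0 ≤ a) (hb : 0 ≤ b) : min a b ^ 3 = min (a^3) (b^3) := by
  rcases le_total a b with h | h
  · rw [min_eq_left h, min_eq_left (pow_le_pow_left₀ ha h 3)]
  · rw [min_eq_right h, min_eq_right (pow_le_pow_left₀ hb h 3)]

lemma descent_arith (α t q p ε ζ L η F F0 : ℝ) (hα0 : 0 < α) (hα1 : α ≤ 1) (ht : 0 < t)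
    (hε : 0 < ε) (hζ1 : ζ < 1)
    (hq : ε*t^2 ≤ q) (hp : p ≤ ζ/2*(ε*t)*t)
    (hcond : (L+η)*(α^2*t) < 3*((1-ζ)*ε))
    (hT : F ≤ F0 + α*(p - q) + 1/2*(α^2*q) + L/6*(α*t)^3) :
    F < F0 - η/6*α^3*t^3 := by
  have h2 : α*(1-α/2)*(ε*t^2) ≤ α*(1-α/2)*q :=
    mul_le_mul_of_nonneg_left hq (mul_nonneg hα0.le (by linarith))
  have h3 : α*p ≤ α*(ζ/2*(ε*t)*t) := mul_le_mul_of_nonneg_left hp hα0.le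
  have h5 : (L+η)*(α^2*t)*(α*t^2/6) < 3*((1-ζ)*ε)*(α*t^2/6) :=
    mul_lt_mul_of_pos_right hcond (by positivity)
  have h6 : α^2*(ε*t^2) ≤ α*(ε*t^2) := by
    have : α^2 ≤ α := by nlinarith
    exact mul_le_mul_of_nonneg_right this (by positivity)
  nlinarith [h2, h3, h5, h6]

lemma case0_arith (tv m ε ζ L c g2 : ℝ) (hm : 0 < m) (hε : 0 < ε) (hζ : 0 < ζ) (hL : 0 < L)
    (hc : 0 < c) (ht : 0 ≤ tv) (hcon : tv < c*m)
    (hgt : g2 ≤ ζ/2*(ε*tv) + L/2*tv^2) (hεm : ε*m ≤ g2) (hmε : m ≤ ε)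
    (heq : ζ/2*c + L/2*c^2 = 1) : False := by
  have h1 : ζ/2*(ε*tv) ≤ ζ/2*(ε*(c*m)) := by
    have := mul_le_mul_of_nonneg_left hcon.le (by positivity : (0:ℝ) ≤ ζ/2*ε)
    nlinarith [this]
  have h2 : tv*tv < (c*m)*(c*m) := mul_self_lt_mul_self ht hcon
  have h3 : c^2*(m*m) ≤ c^2*(m*ε) := by
    have := mul_le_mul_of_nonneg_left hmε (by positivity : (0:ℝ) ≤ c^2*m)
    nlinarith [this]
  have h4 : (ζ/2*c + L/2*c^2)*(ε*m) = ε*m := by rw [heq]; ring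
  nlinarith [h1, h2, h3, h4]

lemma normsq_bound (a b U ζ : ℝ) (ha : 0 ≤ a) (hab : a ≤ ζ/2*b) (hbU : b ≤ U)
    (hb : 0 ≤ b) (hU : 0 ≤ U) : a^2 + b^2 ≤ (1+ζ^2/4)*U^2 := by
  nlinarith [mul_self_le_mul_self ha hab, mul_self_le_mul_self hb hbU, sq_nonneg ζ,
    mul_self_le_mul_self hb hbU, sq_nonneg b, mul_le_mul_of_nonneg_left (mul_self_le_mul_self hb hbU) (by positivity : (0:ℝ) ≤ ζ^2/4)]

lemma c1_eq (ζ L s : ℝ) (hζ : 0 < ζ) (hs : 0 < s) (hs2 : s^2 = ζ^2+8*L) :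
    ζ/2*(4/(ζ+s)) + L/2*(4/(ζ+s))^2 = 1 := by
  have hζs : 0 < ζ + s := by linarith
  field_simp
  nlinarith [hs2]

set_option maxHeartbeats 1000000 in
/-- Lemma 3.4: line search along the inexact Newton direction. -/
theorem inexact_newton_step_linesearch
    {n : ℕ} (f : EuclideanSpace ℝ (Fin n) → ℝ)
    (gradf : EuclideanSpace ℝ (Fin n) → EuclideanSpace ℝ (Fin n))
    (hessf : EuclideanSpace ℝ (Fin n) → EuclideanSpace ℝ (Fin n) →L[ℝ] EuclideanSpace ℝ (Fin n))
    (hf : ContDiff ℝ 2 f)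
    (hgrad : ∀ x, HasGradientAt f (gradf x) x)
    (hhess : ∀ x, HasFDerivAt gradf (hessf x) x)
    (L_H : ℝ) (hLH : 0 < L_H)
    (hlip : ∀ x y, ‖hessf x - hessf y‖ ≤ L_H * ‖x - y‖)
    (θ η ε_H ζ U_g : ℝ) (hθ : θ ∈ Set.Ioo (0:ℝ) 1) (hη : 0 < η)
    (hεH : ε_H ∈ Set.Ioo (0:ℝ) 1) (hζ : ζ ∈ Set.Ioo (0:ℝ) 1) (hUg : 0 < U_g)
    (x d : EuclideanSpace ℝ (Fin n))
    (hpd : ∀ v : EuclideanSpace ℝ (Fin n), ε_H * ‖v‖^2 ≤ ⟪v, hessf x v⟫)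
    (hgb : ‖gradf x‖ ≤ U_g) (hgne : gradf x ≠ 0)
    (hres : ‖hessf x d + gradf x‖ ≤ ζ/2 * min (‖gradf x‖) (ε_H * ‖d‖))
    (horth : ⟪gradf x, hessf x d + gradf x⟫ = 0) :
    ∃ jk : ℕ,
      (f (x + θ^jk • d) < f x - η/6 * θ^(3*jk) * ‖d‖^3) ∧
      (∀ j : ℕ, j < jk → ¬ (f (x + θ^j • d) < f x - η/6 * θ^(3*j) * ‖d‖^3)) ∧
      (jk : ℝ) ≤ max ((1/2) * Real.logb θ
        (3/(L_H+η) * ((1-ζ) * ε_H^2 / (U_g * Real.sqrt (1+ζ^2/4))))) 0 + 1 ∧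
      f x - f (x + θ^jk • d) ≥
        η/6 * min ((4/(ζ + Real.sqrt (ζ^2 + 8*L_H)))^3) ((3*θ^2*(1-ζ)/(L_H+η))^3) *
          min (‖gradf (x + θ^jk • d)‖^3 / ε_H^3) (ε_H^3) := by
  classical
  obtain ⟨hθ0, hθ1⟩ := hθ
  obtain ⟨hε0, hε1⟩ := hεH
  obtain ⟨hζ0, hζ1⟩ := hζ
  have h1ζ : (0:ℝ) < 1 - ζ := by linarith
  have hLη : (0:ℝ) < L_H + η := by linarith
  -- d ≠ 0
  have hd0 : d ≠ 0 := by
    intro h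
    rw [h] at hres
    simp only [norm_zero, mul_zero] at hres
    have h1 : min (‖gradf x‖) 0 = 0 := min_eq_right (norm_nonneg _)
    rw [h1, mul_zero] at hres
    simp only [map_zero, zero_add] at hres
    exact hgne (norm_le_zero_iff.mp hres)
  have hdn : (0:ℝ) < ‖d‖ := norm_pos_iff.mpr hd0
  set r : EuclideanSpace ℝ (Fin n) := hessf x d + gradf x with hrdef
  have hrεd : ‖r‖ ≤ ζ/2 * (ε_H * ‖d‖) := by
    refine hres.trans ?_
    have : min (‖gradf x‖) (ε_H * ‖d‖) ≤ ε_H * ‖d‖ := min_le_right _ _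
    have hζ2 : (0:ℝ) ≤ ζ/2 := by linarith
    exact mul_le_mul_of_nonneg_left this hζ2
  have hrg : ‖r‖ ≤ ζ/2 * ‖gradf x‖ := by
    refine hres.trans ?_
    have : min (‖gradf x‖) (ε_H * ‖d‖) ≤ ‖gradf x‖ := min_le_left _ _
    have hζ2 : (0:ℝ) ≤ ζ/2 := by linarith
    exact mul_le_mul_of_nonneg_left this hζ2
  have hdHd : ε_H * ‖d‖^2 ≤ ⟪d, hessf x d⟫ := hpd d
  -- sufficient descent condition
  have suff : ∀ α : ℝ, 0 < α → α ≤ 1 → (L_H+η) * (α^2*‖d‖) < 3*((1-ζ)*ε_H) →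
      f (x + α • d) < f x - η/6 * α^3 * ‖d‖^3 := by
    intro α hα0 hα1 hcond
    have T := aux_fun_taylor f gradf hessf hgrad hhess L_H hlip x (α • d)
    rw [real_inner_smul_right] at T
    have e1 : (⟪hessf x (α • d), α • d⟫ : ℝ) = α^2 * ⟪hessf x d, d⟫ := by
      rw [map_smul, real_inner_smul_left, real_inner_smul_right]; ring
    have e2 : ‖α • d‖ = α * ‖d‖ := by
      rw [norm_smul, Real.norm_eq_abs, abs_of_pos hα0]
    rw [e1, e2] at T
    have e3 : (⟪gradf x, d⟫ : ℝ) = ⟪r, d⟫ - ⟪hessf x d, d⟫ := by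
      rw [hrdef, inner_add_left]; ring
    have e4 : (⟪r, d⟫ : ℝ) ≤ ζ/2 * (ε_H*‖d‖) * ‖d‖ := by
      refine (real_inner_le_norm r d).trans ?_
      exact mul_le_mul_of_nonneg_right hrεd (norm_nonneg d)
    have e5 : (⟪hessf x d, d⟫ : ℝ) = ⟪d, hessf x d⟫ := real_inner_comm _ _
    rw [e3, e5] at T
    exact descent_arith α ‖d‖ (⟪d, hessf x d⟫) (⟪r, d⟫) ε_H ζ L_H η
      (f (x + α • d)) (f x) hα0 hα1 hdn hε0 hζ1 hdHd e4 hcond T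
  -- upper bound on ‖d‖
  have hHd : ε_H * ‖d‖ ≤ ‖hessf x d‖ := by
    have h1 := real_inner_le_norm d (hessf x d)
    have h2 : ε_H * ‖d‖ * ‖d‖ ≤ ‖hessf x d‖ * ‖d‖ := by
      calc ε_H * ‖d‖ * ‖d‖ = ε_H * ‖d‖^2 := by ring
        _ ≤ ⟪d, hessf x d⟫ := hdHd
        _ ≤ ‖d‖ * ‖hessf x d‖ := h1
        _ = ‖hessf x d‖ * ‖d‖ := by ring
    exact le_of_mul_le_mul_right h2 hdn
  have hHd2 : ‖hessf x d‖^2 = ‖r‖^2 + ‖gradf x‖^2 := by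
    have e : hessf x d = r - gradf x := by rw [hrdef]; abel
    rw [e, norm_sub_sq_real, real_inner_comm, horth]
    ring
  have hsq : (0:ℝ) < 1 + ζ^2/4 := by positivity
  have hdub : ε_H * ‖d‖ ≤ U_g * Real.sqrt (1+ζ^2/4) := by
    have h1 : ‖hessf x d‖^2 ≤ (1+ζ^2/4) * U_g^2 := by
      rw [hHd2]
      exact normsq_bound _ _ _ _ (norm_nonneg r) hrg hgb (norm_nonneg (gradf x)) hUg.le
    have h2 : ‖hessf x d‖ ≤ U_g * Real.sqrt (1+ζ^2/4) := by
      have e : U_g * Real.sqrt (1+ζ^2/4) = Real.sqrt ((1+ζ^2/4) * U_g^2) := by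
        rw [Real.sqrt_mul hsq.le, Real.sqrt_sq hUg.le]; ring
      rw [e]
      exact Real.le_sqrt_of_sq_le h1
    exact hHd.trans h2
  -- the threshold
  set A : ℝ := 3/(L_H+η) * ((1-ζ) * ε_H^2 / (U_g * Real.sqrt (1+ζ^2/4))) with hAdef
  have hsqrtpos : (0:ℝ) < Real.sqrt (1+ζ^2/4) := Real.sqrt_pos.mpr hsq
  have hA : (0:ℝ) < A := by
    apply mul_pos (by positivity)
    exact div_pos (mul_pos h1ζ (by positivity)) (by positivity)
  set M : ℝ := max ((1/2) * Real.logb θ A) 0 with hMdef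
  have hM0 : 0 ≤ M := le_max_right _ _
  obtain ⟨j₀, hj₀le, hj₀gt⟩ : ∃ j₀ : ℕ, (j₀:ℝ) ≤ M + 1 ∧ (1/2) * Real.logb θ A < (j₀:ℝ) := by
    refine ⟨⌊M⌋₊ + 1, ?_, ?_⟩
    · have := Nat.floor_le hM0
      push_cast
      linarith
    · have h1 := Nat.lt_floor_add_one M
      have h2 : (1/2) * Real.logb θ A ≤ M := le_max_left _ _
      push_cast
      linarith
  have hθpowA : θ^(2*j₀) < A := by
    have h1 : Real.logb θ A < ((2*j₀ : ℕ) : ℝ) := by push_cast; linarith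
    calc θ^(2*j₀) = θ ^ (((2*j₀ : ℕ)):ℝ) := (Real.rpow_natCast θ (2*j₀)).symm
      _ < θ ^ (Real.logb θ A) := Real.rpow_lt_rpow_of_exponent_gt hθ0 hθ1 h1
      _ = A := Real.rpow_logb hθ0 (ne_of_lt hθ1) hA
  have hAd : (L_H+η) * (A*‖d‖) ≤ 3*((1-ζ)*ε_H) := by
    have e : (L_H+η) * (A*‖d‖) = 3*((1-ζ)*ε_H) * (ε_H*‖d‖/(U_g * Real.sqrt (1+ζ^2/4))) := by
      rw [hAdef]
      field_simp
    rw [e]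
    calc 3*((1-ζ)*ε_H) * (ε_H*‖d‖/(U_g * Real.sqrt (1+ζ^2/4)))
        ≤ 3*((1-ζ)*ε_H) * 1 := by
          gcongr
          exact (div_le_one (by positivity)).mpr hdub
      _ = 3*((1-ζ)*ε_H) := mul_one _
  have hsuffj₀ : f (x + θ^j₀ • d) < f x - η/6 * θ^(3*j₀) * ‖d‖^3 := by
    have h1 : (L_H+η) * ((θ^j₀)^2*‖d‖) < 3*((1-ζ)*ε_H) := by
      have e : (θ^j₀)^2 = θ^(2*j₀) := by rw [← pow_mul, mul_comm]
      rw [e]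
      calc (L_H+η) * (θ^(2*j₀)*‖d‖) < (L_H+η) * (A*‖d‖) := by
            apply mul_lt_mul_of_pos_left _ hLη
            exact mul_lt_mul_of_pos_right hθpowA hdn
        _ ≤ 3*((1-ζ)*ε_H) := hAd
    have h2 := suff (θ^j₀) (pow_pos hθ0 _) (pow_le_one₀ hθ0.le hθ1.le) h1
    rwa [show θ^(3*j₀) = (θ^j₀)^3 by rw [← pow_mul, mul_comm]]
  -- existence of the minimal jk
  have hP : ∃ j : ℕ, f (x + θ^j • d) < f x - η/6 * θ^(3*j) * ‖d‖^3 := ⟨j₀, hsuffj₀⟩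
  set jk : ℕ := Nat.find hP with hjkdef
  refine ⟨jk, Nat.find_spec hP, fun j hj => Nat.find_min hP hj, ?_, ?_⟩
  · have h1 : jk ≤ j₀ := Nat.find_min' hP hsuffj₀
    calc (jk:ℝ) ≤ (j₀:ℝ) := by exact_mod_cast h1
      _ ≤ M + 1 := hj₀le
  -- the decrease bound
  · set α : ℝ := θ^jk with hαdef
    have hα0 : (0:ℝ) < α := pow_pos hθ0 _
    have hα1 : α ≤ 1 := pow_le_one₀ hθ0.le hθ1.le
    have hdec : f x - f (x + α • d) > η/6 * α^3 * ‖d‖^3 := by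
      have := Nat.find_spec hP
      rw [show θ^(3*jk) = (θ^jk)^3 by rw [← pow_mul, mul_comm]] at this
      rw [hαdef]
      linarith [this]
    set s : ℝ := Real.sqrt (ζ^2 + 8*L_H) with hsdef
    have hs0 : 0 < s := Real.sqrt_pos.mpr (by positivity)
    have hs2 : s^2 = ζ^2 + 8*L_H := Real.sq_sqrt (by positivity)
    set c₁ : ℝ := 4/(ζ + s) with hc₁def
    set c₂ : ℝ := 3*θ^2*(1-ζ)/(L_H+η) with hc₂def
    have hc₁0 : 0 < c₁ := by positivity
    have hc₂0 : 0 < c₂ := by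
      apply div_pos _ hLη
      positivity
    set m : ℝ := min (‖gradf (x + α • d)‖/ε_H) ε_H with hmdef
    have hm0 : 0 ≤ m := le_min (by positivity) hε0.le
    have hkey : min c₁ c₂ * m ≤ α * ‖d‖ := by
      rcases Nat.eq_zero_or_pos jk with hjk0 | hjkpos
      · -- jk = 0, α = 1
        have hα : α = 1 := by rw [hαdef, hjk0, pow_zero]
        rw [hα, one_mul]
        have hc1m : c₁ * m ≤ ‖d‖ := by
          by_contra hcon
          push_neg at hcon
          have hmpos : 0 < m := by
            by_contra hm
            push_neg at hm
            exact absurd hcon (not_lt.mpr (le_trans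
              (mul_nonpos_of_nonneg_of_nonpos hc₁0.le hm) hdn.le))
          -- gradient bound at the new point
          have hgt : ‖gradf (x + α • d)‖ ≤ ζ/2*(ε_H*‖d‖) + L_H/2*‖d‖^2 := by
            have hg := aux_grad_taylor gradf hessf hhess L_H hlip x d
            have e : gradf (x + d) = (gradf (x + d) - gradf x - hessf x d) + r := by
              rw [hrdef]; abel
            rw [hα, one_smul]
            calc ‖gradf (x + d)‖ = ‖(gradf (x + d) - gradf x - hessf x d) + r‖ :=
                  congrArg norm e
              _ ≤ ‖gradf (x + d) - gradf x - hessf x d‖ + ‖r‖ := norm_add_le _ _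
              _ ≤ L_H/2*‖d‖^2 + ζ/2*(ε_H*‖d‖) := add_le_add hg hrεd
              _ = ζ/2*(ε_H*‖d‖) + L_H/2*‖d‖^2 := by ring
          have hεm : ε_H * m ≤ ‖gradf (x + α • d)‖ := by
            have := min_le_left (‖gradf (x + α • d)‖/ε_H) ε_H
            rw [← hmdef] at this
            calc ε_H * m ≤ ε_H * (‖gradf (x + α • d)‖/ε_H) :=
                  mul_le_mul_of_nonneg_left this hε0.le
              _ = ‖gradf (x + α • d)‖ := by field_simp
          have hmε : m ≤ ε_H := min_le_right _ _
          have heq : ζ/2*c₁ + L_H/2*c₁^2 = 1 := by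
            rw [hc₁def]; exact c1_eq ζ L_H s hζ0 hs0 hs2
          exact case0_arith ‖d‖ m ε_H ζ L_H c₁ (‖gradf (x + α • d)‖) hmpos hε0 hζ0 hLH hc₁0
            (norm_nonneg d) hcon hgt hεm hmε heq
        calc min c₁ c₂ * m ≤ c₁ * m := by
              exact mul_le_mul_of_nonneg_right (min_le_left _ _) hm0
          _ ≤ ‖d‖ := hc1m
      · -- jk ≥ 1
        obtain ⟨j, hj⟩ : ∃ j, jk = j + 1 := ⟨jk - 1, (Nat.succ_pred_eq_of_pos hjkpos).symm⟩
        have hfail : ¬ (f (x + θ^j • d) < f x - η/6 * θ^(3*j) * ‖d‖^3) :=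
          Nat.find_min hP (by omega)
        have hfail2 : 3*((1-ζ)*ε_H) ≤ (L_H+η) * ((θ^j)^2*‖d‖) := by
          by_contra hcon
          push_neg at hcon
          have := suff (θ^j) (pow_pos hθ0 _) (pow_le_one₀ hθ0.le hθ1.le) hcon
          rw [show (θ^j)^3 = θ^(3*j) by rw [← pow_mul, mul_comm]] at this
          exact hfail this
        have hαθ : α = θ * θ^j := by rw [hαdef, hj, pow_succ]; ring
        have hc₂ε : c₂ * ε_H ≤ α^2 * ‖d‖ := by
          rw [hc₂def, hαθ]
          rw [div_mul_eq_mul_div, div_le_iff₀ hLη]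
          calc 3*θ^2*(1-ζ)*ε_H = θ^2 * (3*((1-ζ)*ε_H)) := by ring
            _ ≤ θ^2 * ((L_H+η) * ((θ^j)^2*‖d‖)) := by
                exact mul_le_mul_of_nonneg_left hfail2 (by positivity)
            _ = (θ * θ^j)^2 * ‖d‖ * (L_H+η) := by ring
        have hα2 : α^2 * ‖d‖ ≤ α * ‖d‖ := by
          have h := mul_le_mul_of_nonneg_right hα1 hα0.le
          have : α^2 ≤ α := by rw [sq]; linarith
          exact mul_le_mul_of_nonneg_right this (norm_nonneg d)
        calc min c₁ c₂ * m ≤ c₂ * ε_H := by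
              apply mul_le_mul (min_le_right _ _) (min_le_right _ _) hm0 hc₂0.le
          _ ≤ α^2 * ‖d‖ := hc₂ε
          _ ≤ α * ‖d‖ := hα2
    -- assemble
    have hmin3 : min (c₁^3) (c₂^3) * min (‖gradf (x + α • d)‖^3/ε_H^3) (ε_H^3)
        = (min c₁ c₂ * m)^3 := by
      have e2 : m^3 = min (‖gradf (x + α • d)‖^3/ε_H^3) (ε_H^3) := by
        rw [hmdef, min_cube _ _ (by positivity) hε0.le, div_pow]
      rw [mul_pow, min_cube _ _ hc₁0.le hc₂0.le, e2]
    have hfinal : min (c₁^3) (c₂^3) * min (‖gradf (x + α • d)‖^3/ε_H^3) (ε_H^3)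
        ≤ α^3 * ‖d‖^3 := by
      rw [hmin3, show α^3 * ‖d‖^3 = (α * ‖d‖)^3 by ring]
      exact pow_le_pow_left₀ (mul_nonneg (le_min hc₁0.le hc₂0.le) hm0) hkey 3
    have : η/6 * (min (c₁^3) (c₂^3) * min (‖gradf (x + α • d)‖^3/ε_H^3) (ε_H^3))
        ≤ η/6 * (α^3 * ‖d‖^3) := by
      exact mul_le_mul_of_nonneg_left hfinal (by positivity)
    calc f x - f (x + α • d) ≥ η/6 * α^3 * ‖d‖^3 := le_of_lt hdec
      _ = η/6 * (α^3 * ‖d‖^3) := by ring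
      _ ≥ η/6 * (min (c₁^3) (c₂^3) * min (‖gradf (x + α • d)‖^3/ε_H^3) (ε_H^3)) := this
      _ = η/6 * min (c₁^3) (c₂^3) * min (‖gradf (x + α • d)‖^3/ε_H^3) (ε_H^3) := by ring
end

section
/- (Unit inexact-Newton step bounds, used in Lemma 3.4) Let f : ℝⁿ → ℝ be twice continuously differentiable with ∇²f Lipschitz continuous with constant L_H > 0, let ε_H > 0 and ζ ∈ (0,1). If d satisfies ‖∇²f(x) d + ∇f(x)‖ ≤ (ζ/2) ε_H ‖d‖, then ‖∇f(x + d)‖ ≤ (L_H/2) ‖d‖² + (ζ/2) ε_H ‖d‖, and consequently ‖d‖ ≥ (4/(ζ + √(ζ² + 8 L_H))) · min( ‖∇f(x + d)‖/ε_H, ε_H ). -/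
open scoped RealInnerProductSpace

open Set in
/-- Second-order Taylor bound for the gradient under Lipschitz Hessian. -/
lemma taylor_grad_bound
    {n : ℕ}
    (gradf : EuclideanSpace ℝ (Fin n) → EuclideanSpace ℝ (Fin n))
    (hessf : EuclideanSpace ℝ (Fin n) → EuclideanSpace ℝ (Fin n) →L[ℝ] EuclideanSpace ℝ (Fin n))
    (hhess : ∀ x, HasFDerivAt gradf (hessf x) x)
    (L_H : ℝ)
    (hlip : ∀ x y, ‖hessf x - hessf y‖ ≤ L_H * ‖x - y‖)
    (x d : EuclideanSpace ℝ (Fin n)) :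
    ‖gradf (x + d) - gradf x - hessf x d‖ ≤ L_H/2 * ‖d‖^2 := by
  set φ : ℝ → EuclideanSpace ℝ (Fin n) :=
    fun t => gradf (x + t • d) - gradf x - t • (hessf x d) with hφ
  have hline : ∀ t : ℝ, HasDerivAt (fun s : ℝ => x + s • d) d t := by
    intro t
    simpa using ((hasDerivAt_id t).smul_const d).const_add x
  have hφ' : ∀ t : ℝ, HasDerivAt φ (hessf (x + t • d) d - hessf x d) t := by
    intro t
    have h1 : HasDerivAt (fun s : ℝ => gradf (x + s • d)) (hessf (x + t • d) d) t :=
      (hhess (x + t • d)).comp_hasDerivAt t (hline t)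
    have h2 : HasDerivAt (fun s : ℝ => s • (hessf x d)) (hessf x d) t := by
      simpa using (hasDerivAt_id t).smul_const (hessf x d)
    exact (h1.sub_const (gradf x)).sub h2
  have key : ∀ t ∈ Icc (0:ℝ) 1, ‖φ t‖ ≤ L_H/2 * ‖d‖^2 * t^2 := by
    have hBderiv : ∀ t : ℝ, HasDerivAt (fun t : ℝ => L_H/2 * ‖d‖^2 * t^2) (L_H * ‖d‖^2 * t) t := by
      intro t
      have : HasDerivAt (fun t : ℝ => L_H/2 * ‖d‖^2 * t^2) (L_H/2 * ‖d‖^2 * (2*t)) t := by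
        simpa using (hasDerivAt_pow 2 t).const_mul (L_H/2 * ‖d‖^2)
      convert this using 1; ring
    have hbound : ∀ t ∈ Ico (0:ℝ) 1,
        ‖hessf (x + t • d) d - hessf x d‖ ≤ L_H * ‖d‖^2 * t := by
      intro t ht
      have h1 := (hessf (x + t • d) - hessf x).le_opNorm d
      rw [ContinuousLinearMap.sub_apply] at h1
      have h2 : ‖hessf (x + t • d) - hessf x‖ ≤ L_H * ‖t • d‖ := by
        have := hlip (x + t • d) x
        rwa [add_sub_cancel_left] at this
      have h3 : ‖t • d‖ = t * ‖d‖ := by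
        rw [norm_smul, Real.norm_eq_abs, abs_of_nonneg ht.1]
      rw [h3] at h2
      calc ‖hessf (x + t • d) d - hessf x d‖ ≤ ‖hessf (x + t • d) - hessf x‖ * ‖d‖ := h1
        _ ≤ L_H * (t * ‖d‖) * ‖d‖ := mul_le_mul_of_nonneg_right h2 (norm_nonneg d)
        _ = L_H * ‖d‖^2 * t := by ring
    exact image_norm_le_of_norm_deriv_right_le_deriv_boundary
      (fun t _ => (hφ' t).continuousAt.continuousWithinAt)
      (fun t _ => (hφ' t).hasDerivWithinAt)
      (by simp [hφ]) hBderiv hbound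
  have := key 1 (by norm_num)
  simpa [hφ] using this

set_option maxHeartbeats 1000000 in
/-- unit inexact-Newton step bounds, used in Lemma 3.4. -/
theorem unit_inexact_newton_bounds
    {n : ℕ} (f : EuclideanSpace ℝ (Fin n) → ℝ)
    (gradf : EuclideanSpace ℝ (Fin n) → EuclideanSpace ℝ (Fin n))
    (hessf : EuclideanSpace ℝ (Fin n) → EuclideanSpace ℝ (Fin n) →L[ℝ] EuclideanSpace ℝ (Fin n))
    (hf : ContDiff ℝ 2 f)
    (hgrad : ∀ x, HasGradientAt f (gradf x) x)
    (hhess : ∀ x, HasFDerivAt gradf (hessf x) x)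
    (L_H : ℝ) (hLH : 0 < L_H)
    (hlip : ∀ x y, ‖hessf x - hessf y‖ ≤ L_H * ‖x - y‖)
    (ε_H ζ : ℝ) (hεH : 0 < ε_H) (hζ : ζ ∈ Set.Ioo (0:ℝ) 1)
    (x d : EuclideanSpace ℝ (Fin n))
    (hres : ‖hessf x d + gradf x‖ ≤ ζ/2 * ε_H * ‖d‖) :
    ‖gradf (x + d)‖ ≤ L_H/2 * ‖d‖^2 + ζ/2 * ε_H * ‖d‖ ∧
    (4/(ζ + Real.sqrt (ζ^2 + 8*L_H))) * min (‖gradf (x + d)‖ / ε_H) ε_H ≤ ‖d‖ := by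
  obtain ⟨hζ0, hζ1⟩ := hζ
  have htaylor := taylor_grad_bound gradf hessf hhess L_H hlip x d
  have hpart1 : ‖gradf (x + d)‖ ≤ L_H/2 * ‖d‖^2 + ζ/2 * ε_H * ‖d‖ := by
    have : ‖gradf (x + d)‖ ≤
        ‖gradf (x + d) - gradf x - hessf x d‖ + ‖hessf x d + gradf x‖ := by
      have := norm_add_le (gradf (x + d) - gradf x - hessf x d) (hessf x d + gradf x)
      simpa [sub_add_eq_add_sub, add_comm, add_left_comm, add_assoc] using this
    linarith
  refine ⟨hpart1, ?_⟩
  set s := Real.sqrt (ζ^2 + 8*L_H) with hs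
  have hs2 : s^2 = ζ^2 + 8*L_H := Real.sq_sqrt (by positivity)
  have hspos : 0 < s := Real.sqrt_pos.2 (by positivity)
  have hden : 0 < ζ + s := by linarith
  set c := 4 / (ζ + s) with hc
  have hcpos : 0 < c := by positivity
  have hceq : L_H/2 * c^2 + ζ/2 * c = 1 := by
    rw [hc]
    field_simp
    nlinarith [hs2]
  set g := ‖gradf (x + d)‖ with hg
  set m := min (g / ε_H) ε_H with hm
  by_cases hm0 : m ≤ 0
  · calc c * m ≤ c * 0 := by nlinarith
      _ ≤ ‖d‖ := by simp [norm_nonneg]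
  push_neg at hm0
  by_contra hcon
  push_neg at hcon
  have hmg : ε_H * m ≤ g := by
    have : m ≤ g / ε_H := min_le_left _ _
    calc ε_H * m ≤ ε_H * (g / ε_H) := by nlinarith
      _ = g := by field_simp
  have hm2 : m^2 ≤ g := by
    have h1 : m ≤ g / ε_H := min_le_left _ _
    have h2 : m ≤ ε_H := min_le_right _ _
    nlinarith
  have hdn : (0:ℝ) ≤ ‖d‖ := norm_nonneg d
  have hlt : g < g := by
    calc g ≤ L_H/2 * ‖d‖^2 + ζ/2 * ε_H * ‖d‖ := hpart1
      _ < L_H/2 * (c*m)^2 + ζ/2 * ε_H * (c*m) := by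
          have hcm : ‖d‖ < c * m := hcon
          have hsq : ‖d‖^2 < (c*m)^2 := by nlinarith
          exact add_lt_add (mul_lt_mul_of_pos_left hsq (by positivity))
            (mul_lt_mul_of_pos_left hcm (by positivity))
      _ ≤ L_H/2 * c^2 * g + ζ/2 * c * g := by
          have A : L_H/2*c^2 * m^2 ≤ L_H/2*c^2 * g :=
            mul_le_mul_of_nonneg_left hm2 (by positivity)
          have B : ζ/2*c * (ε_H*m) ≤ ζ/2*c * g :=
            mul_le_mul_of_nonneg_left hmg (by positivity)
          nlinarith [A, B]
      _ = g := by linear_combination g * hceq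
  exact absurd hlt (lt_irrefl g)
end
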